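/- There do not exist functions r : SimpleGraph (Fin 7 × Fin 3) → (Fin 7 × Fin 3) → ℝ and g : Multiset ℝ → ℕ with the following two properties: (invariance) for all simple graphs H₁, H₂ on Fin 7 × Fin 3 and all vertices v₁, v₂, if there is a graph isomorphism between the subgraph of H₁ induced on the 2-ball around v₁ in H₁ and the subgraph of H₂ induced on the 2-ball around v₂ in H₂ which maps v₁ to v₂, then r H₁ v₁ = r H₂ v₂; and (correctness) for every simple graph H on Fin 7 × Fin 3, applying g to the multiset { r H v : v ∈ Fin 7 × Fin 3 } (with multiplicity) yields the minimum size of a vertex cover of H. That is, no 2-local-gather algorithm computes the minimum vertex cover size exactly on all 21-vertex graphs. -/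

import Mathlib

/-- The `k`-ball around a vertex `v`: vertices reachable from `v` at graph distance at
most `k`. -/
def ball {V : Type*} (G : SimpleGraph V) (v : V) (k : ℕ) : Set V :=
  {u | G.Reachable v u ∧ G.dist v u ≤ k}

lemma self_mem_ball {V : Type*} (G : SimpleGraph V) (v : V) (k : ℕ) : v ∈ ball G v k :=
  ⟨SimpleGraph.Reachable.refl v, by simp [SimpleGraph.dist_self]⟩

/-- A set `S` of vertices is a vertex cover of `G` if every edge of `G` has at least one
endpoint in `S`. -/
def IsVertexCover {V : Type*} (G : SimpleGraph V) (S : Finset V) : Prop :=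
  ∀ ⦃v w : V⦄, G.Adj v w → v ∈ S ∨ w ∈ S

/-- The minimum size of a vertex cover of a graph on a finite vertex type. -/
noncomputable def coverNumber {V : Type*} [Fintype V] (G : SimpleGraph V) : ℕ :=
  sInf {n | ∃ S : Finset V, IsVertexCover G S ∧ S.card = n}

lemma mem_ball_two_iff {V : Type*} (G : SimpleGraph V) (v u : V) :
    u ∈ ball G v 2 ↔ u = v ∨ G.Adj v u ∨ ∃ w, G.Adj v w ∧ G.Adj w u := by
  constructor
  · rintro ⟨hr, hd⟩
    obtain ⟨p, hp⟩ := hr.exists_walk_length_eq_dist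
    rw [← hp] at hd
    clear hp
    match p, hd with
    | SimpleGraph.Walk.nil, _ => left; rfl
    | SimpleGraph.Walk.cons h SimpleGraph.Walk.nil, _ => right; left; exact h
    | SimpleGraph.Walk.cons h (SimpleGraph.Walk.cons h' SimpleGraph.Walk.nil), _ =>
      right; right; exact ⟨_, h, h'⟩
    | SimpleGraph.Walk.cons h (SimpleGraph.Walk.cons h' (SimpleGraph.Walk.cons h'' q)), hd =>
      exfalso
      simp only [SimpleGraph.Walk.length_cons] at hd
      omega
  · rintro (rfl | h | ⟨w, h1, h2⟩)
    · exact ⟨SimpleGraph.Reachable.refl _, by simp [SimpleGraph.dist_self]⟩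
    · refine ⟨⟨h.toWalk⟩, le_trans (SimpleGraph.dist_le h.toWalk) ?_⟩
      simp [SimpleGraph.Walk.length_cons]
    · refine ⟨⟨SimpleGraph.Walk.cons h1 h2.toWalk⟩,
        le_trans (SimpleGraph.dist_le (SimpleGraph.Walk.cons h1 h2.toWalk)) ?_⟩
      simp [SimpleGraph.Walk.length_cons]

abbrev V21 := Fin 7 × Fin 3

def f1 : V21 → ZMod 21 := fun p => (p.1.val : ZMod 21) + 7 * (p.2.val : ZMod 21)

lemma f1_inj : Function.Injective f1 := by decide

lemma f1_bij : Function.Bijective f1 :=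
  (Fintype.bijective_iff_injective_and_card f1).mpr ⟨f1_inj, by simp⟩

noncomputable def E1 : V21 ≃ ZMod 21 := Equiv.ofBijective f1 f1_bij

def g7 : Fin 7 → ZMod 7 := fun i => (i.val : ZMod 7)

lemma g7_inj : Function.Injective g7 := by decide

noncomputable def E7 : Fin 7 ≃ ZMod 7 :=
  Equiv.ofBijective g7 ((Fintype.bijective_iff_injective_and_card g7).mpr ⟨g7_inj, by simp⟩)

def H1 : SimpleGraph V21 where
  Adj u v := f1 u - f1 v = 1 ∨ f1 v - f1 u = 1
  symm := ⟨fun u v h => h.symm⟩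
  loopless := ⟨fun u h => by
    simp only [sub_self] at h; rcases h with h | h <;> exact absurd h (by decide)⟩

def H2 : SimpleGraph V21 where
  Adj u v := u.2 = v.2 ∧ (g7 u.1 - g7 v.1 = 1 ∨ g7 v.1 - g7 u.1 = 1)
  symm := ⟨fun u v h => ⟨h.1.symm, h.2.symm⟩⟩
  loopless := ⟨fun u h => by
    rcases h.2 with h' | h' <;> simp only [sub_self] at h' <;> exact absurd h' (by decide)⟩

instance : DecidableRel H1.Adj := fun _ _ => inferInstanceAs (Decidable (_ ∨ _))
instance : DecidableRel H2.Adj := fun _ _ => inferInstanceAs (Decidable (_ ∧ _))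

lemma H1_adj_iff {u v : V21} : H1.Adj u v ↔ (f1 u - f1 v = 1 ∨ f1 v - f1 u = 1) := Iff.rfl
lemma H2_adj_iff {u v : V21} :
    H2.Adj u v ↔ (u.2 = v.2 ∧ (g7 u.1 - g7 v.1 = 1 ∨ g7 v.1 - g7 u.1 = 1)) := Iff.rfl

def δ : Fin 5 → ℤ
  | ⟨0,_⟩ => 0 | ⟨1,_⟩ => 1 | ⟨2,_⟩ => -1 | ⟨3,_⟩ => 2 | ⟨4,_⟩ => -2

noncomputable def e1 (v : V21) (i : Fin 5) : V21 := E1.symm (f1 v + ((δ i : ℤ) : ZMod 21))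

lemma f1_e1 (v : V21) (i : Fin 5) : f1 (e1 v i) = f1 v + ((δ i : ℤ) : ZMod 21) :=
  E1.apply_symm_apply _

noncomputable def e2 (v : V21) (i : Fin 5) : V21 :=
  (E7.symm (g7 v.1 + ((δ i : ℤ) : ZMod 7)), v.2)

lemma g7_e2 (v : V21) (i : Fin 5) : g7 (e2 v i).1 = g7 v.1 + ((δ i : ℤ) : ZMod 7) :=
  E7.apply_symm_apply _

lemma e2_snd (v : V21) (i : Fin 5) : (e2 v i).2 = v.2 := rfl

-- adjacency between ball elements
lemma adj_e1 (v : V21) (i j : Fin 5) :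
    H1.Adj (e1 v i) (e1 v j) ↔
      (((δ i - δ j : ℤ) : ZMod 21) = 1 ∨ ((δ j - δ i : ℤ) : ZMod 21) = 1) := by
  rw [H1_adj_iff, f1_e1, f1_e1]
  constructor <;> rintro (h | h)
  · left; push_cast; push_cast at h; linear_combination h
  · right; push_cast; push_cast at h; linear_combination h
  · left; push_cast; push_cast at h; linear_combination h
  · right; push_cast; push_cast at h; linear_combination h

lemma adj_e2 (v : V21) (i j : Fin 5) :
    H2.Adj (e2 v i) (e2 v j) ↔
      (((δ i - δ j : ℤ) : ZMod 7) = 1 ∨ ((δ j - δ i : ℤ) : ZMod 7) = 1) := by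
  rw [H2_adj_iff, g7_e2, g7_e2, e2_snd, e2_snd]
  constructor
  · rintro ⟨-, (h | h)⟩
    · left; push_cast; push_cast at h; linear_combination h
    · right; push_cast; push_cast at h; linear_combination h
  · rintro (h | h)
    · exact ⟨rfl, Or.inl (by push_cast; push_cast at h; linear_combination h)⟩
    · exact ⟨rfl, Or.inr (by push_cast; push_cast at h; linear_combination h)⟩

lemma adj_bridge : ∀ i j : Fin 5,
    (((δ i - δ j : ℤ) : ZMod 21) = 1 ∨ ((δ j - δ i : ℤ) : ZMod 21) = 1) ↔
    (((δ i - δ j : ℤ) : ZMod 7) = 1 ∨ ((δ j - δ i : ℤ) : ZMod 7) = 1) := by decide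

lemma delta_inj21 : ∀ i j : Fin 5, ((δ i : ℤ) : ZMod 21) = ((δ j : ℤ) : ZMod 21) → i = j := by
  decide

lemma delta_inj7 : ∀ i j : Fin 5, ((δ i : ℤ) : ZMod 7) = ((δ j : ℤ) : ZMod 7) → i = j := by
  decide

lemma e1_inj (v : V21) : Function.Injective (e1 v) := by
  intro i j h
  have := E1.symm.injective h
  exact delta_inj21 i j (by exact add_left_cancel this)

lemma e2_inj (v : V21) : Function.Injective (e2 v) := by
  intro i j h
  have h1 : E7.symm (g7 v.1 + ((δ i : ℤ) : ZMod 7)) = E7.symm (g7 v.1 + ((δ j : ℤ) : ZMod 7)) :=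
    congrArg Prod.fst h
  have := E7.symm.injective h1
  exact delta_inj7 i j (add_left_cancel this)

lemma mem_e1 (v : V21) (i : Fin 5) : e1 v i ∈ ball H1 v 2 := by
  rw [mem_ball_two_iff]
  fin_cases i
  · left
    apply f1_inj
    rw [f1_e1]
    norm_num [δ]
  · right; left
    rw [H1_adj_iff, f1_e1]
    right; norm_num [δ]
  · right; left
    rw [H1_adj_iff, f1_e1]
    left; push_cast [δ]; ring
  · right; right
    refine ⟨e1 v 1, ?_, ?_⟩
    · rw [H1_adj_iff, f1_e1]; right; norm_num [δ]
    · rw [H1_adj_iff, f1_e1, f1_e1]; right; push_cast [δ]; ring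
  · right; right
    refine ⟨e1 v 2, ?_, ?_⟩
    · rw [H1_adj_iff, f1_e1]; left; push_cast [δ]; ring
    · rw [H1_adj_iff, f1_e1, f1_e1]; left; push_cast [δ]; ring

lemma mem_e2 (v : V21) (i : Fin 5) : e2 v i ∈ ball H2 v 2 := by
  rw [mem_ball_two_iff]
  fin_cases i
  · left
    have h1 : g7 (e2 v ⟨0, by norm_num⟩).1 = g7 v.1 := by rw [g7_e2]; norm_num [δ]
    have := g7_inj h1
    exact Prod.ext this (e2_snd v _)
  · right; left
    refine ⟨(e2_snd v _).symm, Or.inr ?_⟩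
    rw [g7_e2]; norm_num [δ]
  · right; left
    refine ⟨(e2_snd v _).symm, Or.inl ?_⟩
    rw [g7_e2]; push_cast [δ]; ring
  · right; right
    refine ⟨e2 v 1, ⟨(e2_snd v _).symm, Or.inr ?_⟩, ⟨rfl, Or.inr ?_⟩⟩
    · rw [g7_e2]; norm_num [δ]
    · rw [g7_e2, g7_e2]; push_cast [δ]; ring
  · right; right
    refine ⟨e2 v 2, ⟨(e2_snd v _).symm, Or.inl ?_⟩, ⟨rfl, Or.inl ?_⟩⟩
    · rw [g7_e2]; push_cast [δ]; ring
    · rw [g7_e2, g7_e2]; push_cast [δ]; ring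

lemma e1_eq_iff {v u : V21} {i : Fin 5} : e1 v i = u ↔ f1 v + ((δ i : ℤ) : ZMod 21) = f1 u :=
  Equiv.symm_apply_eq E1

lemma surj_e1 {v u : V21} (h : u ∈ ball H1 v 2) : ∃ i : Fin 5, e1 v i = u := by
  rw [mem_ball_two_iff] at h
  rcases h with rfl | h | ⟨w, hvw, hwu⟩
  · exact ⟨0, e1_eq_iff.mpr (by norm_num [δ])⟩
  · rcases h with h | h
    · exact ⟨2, e1_eq_iff.mpr (by push_cast [δ]; linear_combination h)⟩
    · exact ⟨1, e1_eq_iff.mpr (by push_cast [δ]; linear_combination -h)⟩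
  · rcases hvw with h1 | h1 <;> rcases hwu with h2 | h2
    · exact ⟨4, e1_eq_iff.mpr (by push_cast [δ]; linear_combination h1 + h2)⟩
    · exact ⟨0, e1_eq_iff.mpr (by push_cast [δ]; linear_combination h1 - h2)⟩
    · exact ⟨0, e1_eq_iff.mpr (by push_cast [δ]; linear_combination h2 - h1)⟩
    · exact ⟨3, e1_eq_iff.mpr (by push_cast [δ]; linear_combination -h1 - h2)⟩

lemma e2_eq_iff {v u : V21} {i : Fin 5} :
    e2 v i = u ↔ (g7 v.1 + ((δ i : ℤ) : ZMod 7) = g7 u.1 ∧ v.2 = u.2) := by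
  rw [Prod.ext_iff]
  constructor
  · rintro ⟨h1, h2⟩
    exact ⟨by rw [← h1, g7_e2], h2⟩
  · rintro ⟨h1, h2⟩
    refine ⟨?_, h2⟩
    apply g7_inj
    rw [g7_e2, h1]

lemma surj_e2 {v u : V21} (h : u ∈ ball H2 v 2) : ∃ i : Fin 5, e2 v i = u := by
  rw [mem_ball_two_iff] at h
  rcases h with rfl | h | ⟨w, hvw, hwu⟩
  · exact ⟨0, e2_eq_iff.mpr ⟨by norm_num [δ], rfl⟩⟩
  · obtain ⟨hs, h⟩ := h
    rcases h with h | h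
    · exact ⟨2, e2_eq_iff.mpr ⟨by push_cast [δ]; linear_combination h, hs⟩⟩
    · exact ⟨1, e2_eq_iff.mpr ⟨by push_cast [δ]; linear_combination -h, hs⟩⟩
  · obtain ⟨hs1, hvw⟩ := hvw
    obtain ⟨hs2, hwu⟩ := hwu
    have hs := hs1.trans hs2
    rcases hvw with h1 | h1 <;> rcases hwu with h2 | h2
    · exact ⟨4, e2_eq_iff.mpr ⟨by push_cast [δ]; linear_combination h1 + h2, hs⟩⟩
    · exact ⟨0, e2_eq_iff.mpr ⟨by push_cast [δ]; linear_combination h1 - h2, hs⟩⟩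
    · exact ⟨0, e2_eq_iff.mpr ⟨by push_cast [δ]; linear_combination h2 - h1, hs⟩⟩
    · exact ⟨3, e2_eq_iff.mpr ⟨by push_cast [δ]; linear_combination -h1 - h2, hs⟩⟩

lemma e1_zero (v : V21) : e1 v 0 = v := by
  apply f1_inj; rw [f1_e1]; norm_num [δ]

lemma e2_zero (v : V21) : e2 v 0 = v := by
  refine Prod.ext ?_ rfl
  apply g7_inj; rw [g7_e2]; norm_num [δ]

noncomputable def eqA (v : V21) : Fin 5 ≃ (ball H1 v 2 : Set V21) :=
  Equiv.ofBijective (fun i => ⟨e1 v i, mem_e1 v i⟩)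
    ⟨fun i j h => e1_inj v (congrArg Subtype.val h),
     fun u => by obtain ⟨i, hi⟩ := surj_e1 u.2; exact ⟨i, Subtype.ext hi⟩⟩

noncomputable def eqB (v : V21) : Fin 5 ≃ (ball H2 v 2 : Set V21) :=
  Equiv.ofBijective (fun i => ⟨e2 v i, mem_e2 v i⟩)
    ⟨fun i j h => e2_inj v (congrArg Subtype.val h),
     fun u => by obtain ⟨i, hi⟩ := surj_e2 u.2; exact ⟨i, Subtype.ext hi⟩⟩

noncomputable def ballIso (v₁ v₂ : V21) :
    H1.induce (ball H1 v₁ 2) ≃g H2.induce (ball H2 v₂ 2) where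
  toEquiv := (eqA v₁).symm.trans (eqB v₂)
  map_rel_iff' := by
    intro x y
    have hx : x = eqA v₁ ((eqA v₁).symm x) := ((eqA v₁).apply_symm_apply x).symm
    have hy : y = eqA v₁ ((eqA v₁).symm y) := ((eqA v₁).apply_symm_apply y).symm
    set i := (eqA v₁).symm x
    set j := (eqA v₁).symm y
    rw [hx, hy]
    show (H2.induce _).Adj (eqB v₂ ((eqA v₁).symm (eqA v₁ i))) (eqB v₂ ((eqA v₁).symm (eqA v₁ j)))
      ↔ (H1.induce _).Adj (eqA v₁ i) (eqA v₁ j)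
    rw [(eqA v₁).symm_apply_apply, (eqA v₁).symm_apply_apply]
    show H2.Adj (e2 v₂ i) (e2 v₂ j) ↔ H1.Adj (e1 v₁ i) (e1 v₁ j)
    rw [adj_e2, adj_e1]
    exact (adj_bridge i j).symm

lemma ballIso_center (v₁ v₂ : V21) :
    (ballIso v₁ v₂) ⟨v₁, self_mem_ball H1 v₁ 2⟩ = ⟨v₂, self_mem_ball H2 v₂ 2⟩ := by
  have h1 : (⟨v₁, self_mem_ball H1 v₁ 2⟩ : ball H1 v₁ 2) = eqA v₁ 0 :=
    Subtype.ext (e1_zero v₁).symm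
  show (eqB v₂) ((eqA v₁).symm ⟨v₁, self_mem_ball H1 v₁ 2⟩) = _
  rw [h1, (eqA v₁).symm_apply_apply]
  exact Subtype.ext (e2_zero v₂)

lemma cover_count {V : Type*} [Fintype V] [DecidableEq V] (G : SimpleGraph V)
    [DecidableRel G.Adj] (S : Finset V) (h : IsVertexCover G S) :
    G.edgeFinset.card ≤ ∑ v ∈ S, G.degree v := by
  have hsub : G.edgeFinset ⊆ S.biUnion (fun v => G.incidenceFinset v) := by
    intro e he
    induction e with
    | h a b =>
      rw [SimpleGraph.mem_edgeFinset, SimpleGraph.mem_edgeSet] at he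
      rcases h he with hs | hs
      · exact Finset.mem_biUnion.mpr ⟨a, hs, by
          rw [SimpleGraph.mem_incidenceFinset]
          exact G.mk'_mem_incidenceSet_left_iff.mpr he⟩
      · exact Finset.mem_biUnion.mpr ⟨b, hs, by
          rw [SimpleGraph.mem_incidenceFinset]
          exact G.mk'_mem_incidenceSet_right_iff.mpr he⟩
  calc G.edgeFinset.card ≤ (S.biUnion (fun v => G.incidenceFinset v)).card :=
        Finset.card_le_card hsub
    _ ≤ ∑ v ∈ S, (G.incidenceFinset v).card := Finset.card_biUnion_le
    _ = ∑ v ∈ S, G.degree v := by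
        simp [SimpleGraph.card_incidenceFinset_eq_degree]

def S1 : Finset V21 :=
  Finset.univ.filter
    (fun p => f1 p ∈ ({1,3,5,7,9,11,13,15,17,19,20} : Finset (ZMod 21)))

lemma S1_card : S1.card = 11 := by decide

lemma S1_cover : IsVertexCover H1 S1 :=
  fun v w h => (by decide : ∀ v w : V21, H1.Adj v w → (v ∈ S1 ∨ w ∈ S1)) v w h

lemma H1_lower (S : Finset V21) (h : IsVertexCover H1 S) : 11 ≤ S.card := by
  have hc := cover_count H1 S h
  have hdeg : ∀ v : V21, H1.degree v = 2 := by decide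
  have hE : H1.edgeFinset.card = 21 := by decide
  rw [hE] at hc
  have : ∑ v ∈ S, H1.degree v = 2 * S.card := by
    rw [Finset.sum_congr rfl (fun v _ => hdeg v), Finset.sum_const, smul_eq_mul, mul_comm]
  rw [this] at hc
  omega

lemma covH1 : coverNumber H1 = 11 := by
  apply le_antisymm
  · exact Nat.sInf_le ⟨S1, S1_cover, S1_card⟩
  · exact le_csInf ⟨11, S1, S1_cover, S1_card⟩
      (fun n ⟨S, hS, hc⟩ => hc ▸ H1_lower S hS)

def G3 (j : Fin 3) : SimpleGraph V21 where
  Adj u v := u.2 = j ∧ v.2 = j ∧ H2.Adj u v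
  symm := ⟨fun u v h => ⟨h.2.1, h.1, h.2.2.symm⟩⟩
  loopless := ⟨fun u h => H2.loopless.irrefl u h.2.2⟩

instance (j : Fin 3) : DecidableRel (G3 j).Adj :=
  fun _ _ => inferInstanceAs (Decidable (_ ∧ _ ∧ _))

def S2 : Finset V21 :=
  Finset.univ.filter (fun p => p.1.val ∈ ({1,3,5,6} : Finset ℕ))

lemma S2_card : S2.card = 12 := by decide

lemma S2_cover : IsVertexCover H2 S2 :=
  fun v w h => (by decide : ∀ v w : V21, H2.Adj v w → (v ∈ S2 ∨ w ∈ S2)) v w h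

lemma H2_lower (S : Finset V21) (h : IsVertexCover H2 S) : 12 ≤ S.card := by
  have hfib : ∀ j : Fin 3, 4 ≤ (S.filter (fun v => v.2 = j)).card := by
    intro j
    have hcov : IsVertexCover (G3 j) S := fun v w hadj => h hadj.2.2
    have hc := cover_count (G3 j) S hcov
    have hdeg : ∀ j : Fin 3, ∀ v : V21, (G3 j).degree v = if v.2 = j then 2 else 0 := by decide
    have hE : ∀ j : Fin 3, (G3 j).edgeFinset.card = 7 := by decide
    rw [hE j] at hc
    have hsum : ∑ v ∈ S, (G3 j).degree v = 2 * (S.filter (fun v => v.2 = j)).card := by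
      rw [Finset.sum_congr rfl (fun v _ => hdeg j v), ← Finset.sum_filter,
        Finset.sum_const, smul_eq_mul, mul_comm]
    rw [hsum] at hc
    omega
  have hcard : S.card = ∑ j : Fin 3, (S.filter (fun v => v.2 = j)).card :=
    Finset.card_eq_sum_card_fiberwise (fun v _ => Finset.mem_univ v.2)
  have : (12 : ℕ) = ∑ _j : Fin 3, 4 := by simp
  rw [hcard, this]
  exact Finset.sum_le_sum (fun j _ => hfib j)

lemma covH2 : coverNumber H2 = 12 := by
  apply le_antisymm
  · exact Nat.sInf_le ⟨S2, S2_cover, S2_card⟩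
  · exact le_csInf ⟨12, S2, S2_cover, S2_card⟩
      (fun n ⟨S, hS, hc⟩ => hc ▸ H2_lower S hS)

/-- No 2-local-gather algorithm computes the minimum vertex cover size exactly on all
graphs on 21 vertices: there is no vertex representation `r` depending only on the
isomorphism type of the 2-hop neighborhood of a vertex, together with a gather function
`g` of the multiset of vertex representations, that outputs the minimum vertex cover size
of every graph. -/
theorem no_two_local_gather_computes_minimum_vertex_cover :
    ¬ ∃ (r : SimpleGraph (Fin 7 × Fin 3) → (Fin 7 × Fin 3) → ℝ) (g : Multiset ℝ → ℕ),
      (∀ (H₁ H₂ : SimpleGraph (Fin 7 × Fin 3)) (v₁ v₂ : Fin 7 × Fin 3),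
        (∃ e : H₁.induce (ball H₁ v₁ 2) ≃g H₂.induce (ball H₂ v₂ 2),
          e ⟨v₁, self_mem_ball H₁ v₁ 2⟩ = ⟨v₂, self_mem_ball H₂ v₂ 2⟩) →
        r H₁ v₁ = r H₂ v₂) ∧
      (∀ H : SimpleGraph (Fin 7 × Fin 3),
        g (Multiset.map (r H) (Finset.univ : Finset (Fin 7 × Fin 3)).val) = coverNumber H) := by
  rintro ⟨r, g, hinv, hcor⟩
  have key : ∀ v : V21, r H1 v = r H2 v := fun v =>
    hinv H1 H2 v v ⟨ballIso v v, ballIso_center v v⟩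
  have hr : r H1 = r H2 := funext key
  have h1 := hcor H1
  have h2 := hcor H2
  rw [hr] at h1
  have hcc : coverNumber H1 = coverNumber H2 := h1.symm.trans h2
  rw [covH1, covH2] at hcc
  exact absurd hcc (by norm_num)
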